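/- Fix a, b₁, b₂, c₁, c₂ ∈ ℂ with c₁, c₂ not equal to any nonpositive integer, positive integers k₁, k₂, and x, y ∈ ℂ, and for nonnegative integers τ₁, τ₂ set F(τ₁,τ₂) = 𝓕₂⁽¹⁾(a,b₁,b₂;c₁,c₂;τ₁,τ₂,k₁,k₂,x,y). Let Θ_{t₁} and Θ_{t₂} denote the operators acting on the first, respectively second, discrete variable by (Θ_t f)(t) = t(f(t) − f(t−1)). Then for all integers t₁ ≥ k₁ + 2 and t₂ ≥ 1, [Θ_{t₁}((1/k₁)Θ_{t₁} + c₁ − 1)F](t₁,t₂) = k₁(−1)^{k₁}(−t₁)_{k₁}·x·[((1/k₁)Θ_{t₁} + (1/k₂)Θ_{t₂} + a)((1/k₁)Θ_{t₁} + b₁)F](t₁−k₁, t₂), where Pochhammer (−t₁)_{k₁} is taken at the unshifted value t₁. -/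

import Mathlib

open Complex Finset

/-- Ascending Pochhammer symbol `(z)_j = z (z+1) ⋯ (z+j−1)`, with `(z)_0 = 1`. -/
noncomputable def poch (z : ℂ) (j : ℕ) : ℂ := (ascPochhammer ℂ j).eval z

/-- The first discrete Appell function `𝓕₂⁽¹⁾(a,b₁,b₂;c₁,c₂;t₁,t₂,k₁,k₂,x,y)`.
Since `(−t₁)_{m k₁} = 0` once `m k₁ > t₁` and `(−t₂)_{n k₂} = 0` once `n k₂ > t₂`
(for `k₁, k₂ ≥ 1`), the doubly infinite sum reduces to this finite sum. -/
noncomputable def F2one (a b₁ b₂ c₁ c₂ : ℂ) (t₁ t₂ k₁ k₂ : ℕ) (x y : ℂ) : ℂ :=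
  ∑ m ∈ Finset.range (t₁ + 1), ∑ n ∈ Finset.range (t₂ + 1),
    poch a (m + n) * poch b₁ m * poch b₂ n * (-1 : ℂ) ^ (m * k₁) * poch (-(t₁ : ℂ)) (m * k₁)
      * (-1 : ℂ) ^ (n * k₂) * poch (-(t₂ : ℂ)) (n * k₂) * x ^ m * y ^ n
    / (poch c₁ m * poch c₂ n * (Nat.factorial m : ℂ) * (Nat.factorial n : ℂ))

/-- `Θ` acting on the first discrete variable: `(Θ_{t₁} g)(t₁,t₂) = t₁ (g(t₁,t₂) − g(t₁−1,t₂))`. -/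
noncomputable def Th1 (g : ℕ → ℕ → ℂ) : ℕ → ℕ → ℂ :=
  fun t₁ t₂ => (t₁ : ℂ) * (g t₁ t₂ - g (t₁ - 1) t₂)

/-- `Θ` acting on the second discrete variable: `(Θ_{t₂} g)(t₁,t₂) = t₂ (g(t₁,t₂) − g(t₁,t₂−1))`. -/
noncomputable def Th2 (g : ℕ → ℕ → ℂ) : ℕ → ℕ → ℂ :=
  fun t₁ t₂ => (t₂ : ℂ) * (g t₁ t₂ - g t₁ (t₂ - 1))

/-! ### Auxiliary lemmas -/

lemma poch_succ (z : ℂ) (j : ℕ) : poch z (j+1) = poch z j * (z + j) := by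
  simp [poch, ascPochhammer_succ_right]

lemma poch_ne_zero {c : ℂ} (hc : ∀ n : ℕ, c ≠ -(n : ℂ)) (j : ℕ) : poch c j ≠ 0 := by
  induction j with
  | zero => simp [poch]
  | succ j ih =>
    rw [poch_succ]
    refine mul_ne_zero ih fun h => hc j (by linear_combination h)

lemma poch_neg_nat (t j : ℕ) : (-1 : ℂ)^j * poch (-(t:ℂ)) j = (t.descFactorial j : ℂ) := by
  rw [poch, ascPochhammer_eval_neg_eq_descPochhammer, ← mul_assoc, ← mul_pow]
  simp [descPochhammer_eval_eq_descFactorial]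

lemma natEig (s j : ℕ) :
    (s+1) * (s+1).descFactorial j = j * (s+1).descFactorial j + (s+1) * s.descFactorial j := by
  cases j with
  | zero => simp
  | succ i =>
    rw [Nat.succ_descFactorial_succ, Nat.descFactorial_succ]
    rcases le_or_gt i s with h | h
    · zify [h]
      ring
    · have h0 : s.descFactorial i = 0 := Nat.descFactorial_eq_zero_iff_lt.mpr h
      simp [h0]

lemma cEig {t : ℕ} (j : ℕ) (ht : 1 ≤ t) :
    (t:ℂ) * ((t.descFactorial j : ℂ) - ((t-1).descFactorial j : ℂ))
      = (j:ℂ) * (t.descFactorial j : ℂ) := by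
  obtain ⟨s, rfl⟩ : ∃ s, t = s + 1 := ⟨t - 1, by omega⟩
  have h2 := congrArg (fun n : ℕ => (n:ℂ)) (natEig s j)
  simp only [Nat.add_sub_cancel]
  push_cast at h2 ⊢
  linear_combination h2

/-- the `(m,n)`-summand of `F2one`, with the Pochhammer factors in the discrete
variables rewritten as casts of descending factorials. -/
noncomputable def gg (a b₁ b₂ c₁ c₂ x y : ℂ) (k₁ k₂ : ℕ) (τ₁ τ₂ m n : ℕ) : ℂ :=
  (poch a (m+n) * poch b₁ m * poch b₂ n * x^m * y^n /
    (poch c₁ m * poch c₂ n * (m.factorial : ℂ) * (n.factorial : ℂ)))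
  * (τ₁.descFactorial (m*k₁) : ℂ) * (τ₂.descFactorial (n*k₂) : ℂ)

lemma F2one_eq (a b₁ b₂ c₁ c₂ x y : ℂ) (k₁ k₂ τ₁ τ₂ : ℕ) :
    F2one a b₁ b₂ c₁ c₂ τ₁ τ₂ k₁ k₂ x y
      = ∑ m ∈ range (τ₁+1), ∑ n ∈ range (τ₂+1), gg a b₁ b₂ c₁ c₂ x y k₁ k₂ τ₁ τ₂ m n := by
  unfold F2one
  refine sum_congr rfl fun m _ => sum_congr rfl fun n _ => ?_
  rw [gg, ← poch_neg_nat, ← poch_neg_nat]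
  ring

lemma F2one_ext (a b₁ b₂ c₁ c₂ x y : ℂ) {k₁ k₂ : ℕ} (hk₁ : 0 < k₁) (hk₂ : 0 < k₂)
    {τ₁ τ₂ t₁ t₂ : ℕ} (h1 : τ₁ ≤ t₁) (h2 : τ₂ ≤ t₂) :
    F2one a b₁ b₂ c₁ c₂ τ₁ τ₂ k₁ k₂ x y
      = ∑ m ∈ range (t₁+1), ∑ n ∈ range (t₂+1), gg a b₁ b₂ c₁ c₂ x y k₁ k₂ τ₁ τ₂ m n := by
  rw [F2one_eq]
  have inner : ∀ m, ∑ n ∈ range (τ₂+1), gg a b₁ b₂ c₁ c₂ x y k₁ k₂ τ₁ τ₂ m n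
      = ∑ n ∈ range (t₂+1), gg a b₁ b₂ c₁ c₂ x y k₁ k₂ τ₁ τ₂ m n := by
    intro m
    refine Finset.sum_subset (Finset.range_subset_range.mpr (by omega)) fun n _ hn => ?_
    have hn' : τ₂ < n * k₂ := by
      rw [Finset.mem_range] at hn
      push_neg at hn
      nlinarith
    simp [gg, Nat.descFactorial_eq_zero_iff_lt.mpr hn']
  simp only [inner]
  refine Finset.sum_subset (Finset.range_subset_range.mpr (by omega)) fun m _ hm => ?_
  have hm' : τ₁ < m * k₁ := by
    rw [Finset.mem_range] at hm
    push_neg at hm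
    nlinarith
  simp [gg, Nat.descFactorial_eq_zero_iff_lt.mpr hm']

lemma eig1 (a b₁ b₂ c₁ c₂ x y : ℂ) (k₁ k₂ : ℕ) (w : ℕ → ℕ → ℂ) {τ₁ : ℕ} (hτ : 1 ≤ τ₁)
    (τ₂ T N : ℕ) :
    (τ₁:ℂ) * ((∑ m ∈ range T, ∑ n ∈ range N, w m n * gg a b₁ b₂ c₁ c₂ x y k₁ k₂ τ₁ τ₂ m n)
      - ∑ m ∈ range T, ∑ n ∈ range N, w m n * gg a b₁ b₂ c₁ c₂ x y k₁ k₂ (τ₁-1) τ₂ m n)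
    = ∑ m ∈ range T, ∑ n ∈ range N,
        ((m:ℂ) * (k₁:ℂ) * w m n) * gg a b₁ b₂ c₁ c₂ x y k₁ k₂ τ₁ τ₂ m n := by
  rw [← Finset.sum_sub_distrib, Finset.mul_sum]
  refine sum_congr rfl fun m _ => ?_
  rw [← Finset.sum_sub_distrib, Finset.mul_sum]
  refine sum_congr rfl fun n _ => ?_
  have h := cEig (t := τ₁) (m*k₁) hτ
  push_cast at h
  simp only [gg]
  linear_combination (w m n * (poch a (m+n) * poch b₁ m * poch b₂ n * x^m * y^n /
    (poch c₁ m * poch c₂ n * (m.factorial : ℂ) * (n.factorial : ℂ)))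
    * (τ₂.descFactorial (n*k₂) : ℂ)) * h

lemma eig2 (a b₁ b₂ c₁ c₂ x y : ℂ) (k₁ k₂ : ℕ) (w : ℕ → ℕ → ℂ) (τ₁ : ℕ) {τ₂ : ℕ}
    (hτ : 1 ≤ τ₂) (T N : ℕ) :
    (τ₂:ℂ) * ((∑ m ∈ range T, ∑ n ∈ range N, w m n * gg a b₁ b₂ c₁ c₂ x y k₁ k₂ τ₁ τ₂ m n)
      - ∑ m ∈ range T, ∑ n ∈ range N, w m n * gg a b₁ b₂ c₁ c₂ x y k₁ k₂ τ₁ (τ₂-1) m n)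
    = ∑ m ∈ range T, ∑ n ∈ range N,
        ((n:ℂ) * (k₂:ℂ) * w m n) * gg a b₁ b₂ c₁ c₂ x y k₁ k₂ τ₁ τ₂ m n := by
  rw [← Finset.sum_sub_distrib, Finset.mul_sum]
  refine sum_congr rfl fun m _ => ?_
  rw [← Finset.sum_sub_distrib, Finset.mul_sum]
  refine sum_congr rfl fun n _ => ?_
  have h := cEig (t := τ₂) (n*k₂) hτ
  push_cast at h
  simp only [gg]
  linear_combination (w m n * (poch a (m+n) * poch b₁ m * poch b₂ n * x^m * y^n /
    (poch c₁ m * poch c₂ n * (m.factorial : ℂ) * (n.factorial : ℂ)))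
    * (τ₁.descFactorial (m*k₁) : ℂ)) * h

lemma pointwise (a b₁ b₂ c₁ c₂ x y : ℂ) {k₁ : ℕ} (k₂ : ℕ) (hk₁ : 0 < k₁)
    (hc₁ : ∀ n : ℕ, c₁ ≠ -(n : ℂ)) (hc₂ : ∀ n : ℕ, c₂ ≠ -(n : ℂ))
    {t₁ : ℕ} (t₂ : ℕ) (hkt : k₁ ≤ t₁) (m n : ℕ) :
    (((m:ℂ)+1) * (k₁:ℂ) * (((m:ℂ)+1) + c₁ - 1)) * gg a b₁ b₂ c₁ c₂ x y k₁ k₂ t₁ t₂ (m+1) n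
    = (k₁:ℂ) * (t₁.descFactorial k₁ : ℂ) * x *
        ((((m:ℂ)+(n:ℂ)+a) * ((m:ℂ)+b₁)) * gg a b₁ b₂ c₁ c₂ x y k₁ k₂ (t₁-k₁) t₂ m n) := by
  have hD : (t₁.descFactorial ((m+1)*k₁) : ℂ)
      = ((t₁-k₁).descFactorial (m*k₁) : ℂ) * (t₁.descFactorial k₁ : ℂ) := by
    rw [← Nat.cast_mul]
    congr 1
    have := Nat.descFactorial_mul_descFactorial (k := k₁) (m := (m+1)*k₁) (n := t₁)
      (by nlinarith)
    rw [← this]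
    congr 2
    rw [Nat.succ_mul]
    omega
  have hpa : poch a (m+1+n) = poch a (m+n) * (a + (m:ℂ) + (n:ℂ)) := by
    have h : m+1+n = (m+n)+1 := by omega
    rw [h, poch_succ]
    push_cast
    ring
  have hpb : poch b₁ (m+1) = poch b₁ m * (b₁ + (m:ℂ)) := poch_succ b₁ m
  have hpc : poch c₁ (m+1) = poch c₁ m * (c₁ + (m:ℂ)) := poch_succ c₁ m
  have hfac : ((m+1).factorial : ℂ) = ((m:ℂ)+1) * (m.factorial : ℂ) := by
    push_cast [Nat.factorial_succ]
    ring
  have h1 : poch c₁ m ≠ 0 := poch_ne_zero hc₁ m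
  have h2 : poch c₂ n ≠ 0 := poch_ne_zero hc₂ n
  have h3 : (c₁ + (m:ℂ)) ≠ 0 := fun h => hc₁ m (by linear_combination h)
  have h4 : ((m.factorial : ℂ)) ≠ 0 := Nat.cast_ne_zero.mpr m.factorial_ne_zero
  have h5 : ((n.factorial : ℂ)) ≠ 0 := Nat.cast_ne_zero.mpr n.factorial_ne_zero
  have h6 : ((m:ℂ)+1) ≠ 0 := Nat.cast_add_one_ne_zero m
  have hq : (c₁ + (m:ℂ)) * ((m:ℂ)+1) *
        (poch a (m+1+n) * poch b₁ (m+1) * poch b₂ n * x^(m+1) * y^n /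
          (poch c₁ (m+1) * poch c₂ n * ((m+1).factorial : ℂ) * (n.factorial : ℂ)))
      = (a + (m:ℂ) + (n:ℂ)) * (b₁ + (m:ℂ)) * x *
        (poch a (m+n) * poch b₁ m * poch b₂ n * x^m * y^n /
          (poch c₁ m * poch c₂ n * (m.factorial : ℂ) * (n.factorial : ℂ))) := by
    rw [hpa, hpb, hpc, hfac, pow_succ, ← mul_div_assoc, ← mul_div_assoc,
      div_eq_div_iff
        (mul_ne_zero (mul_ne_zero (mul_ne_zero (mul_ne_zero h1 h3) h2)
          (mul_ne_zero h6 h4)) h5)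
        (mul_ne_zero (mul_ne_zero (mul_ne_zero h1 h2) h4) h5)]
    ring
  simp only [gg, hD]
  linear_combination ((k₁:ℂ) * (((t₁-k₁).descFactorial (m*k₁) : ℂ)) *
    ((t₁.descFactorial k₁ : ℕ) : ℂ) * ((t₂.descFactorial (n*k₂) : ℂ))) * hq

lemma final_sum (a b₁ b₂ c₁ c₂ x y : ℂ) {k₁ : ℕ} (k₂ : ℕ) (hk₁ : 0 < k₁)
    (hc₁ : ∀ n : ℕ, c₁ ≠ -(n : ℂ)) (hc₂ : ∀ n : ℕ, c₂ ≠ -(n : ℂ))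
    {t₁ : ℕ} (t₂ : ℕ) (ht₁ : 1 ≤ t₁) (hkt : k₁ ≤ t₁) :
    ∑ m ∈ range (t₁+1), ∑ n ∈ range (t₂+1),
        ((m:ℂ)*(k₁:ℂ)*((m:ℂ)+c₁-1)) * gg a b₁ b₂ c₁ c₂ x y k₁ k₂ t₁ t₂ m n
    = (k₁:ℂ) * (t₁.descFactorial k₁ : ℂ) * x *
      ∑ m ∈ range (t₁+1), ∑ n ∈ range (t₂+1),
        (((m:ℂ)+(n:ℂ)+a)*((m:ℂ)+b₁)) * gg a b₁ b₂ c₁ c₂ x y k₁ k₂ (t₁-k₁) t₂ m n := by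
  rw [Finset.sum_range_succ']
  rw [Finset.sum_range_succ (n := t₁)]
  have hlast : ∑ n ∈ range (t₂+1),
      (((t₁:ℂ)+(n:ℂ)+a)*((t₁:ℂ)+b₁)) * gg a b₁ b₂ c₁ c₂ x y k₁ k₂ (t₁-k₁) t₂ t₁ n = 0 := by
    have h0 : t₁ - k₁ < t₁ * k₁ := by
      have := Nat.le_mul_of_pos_right t₁ hk₁
      omega
    refine Finset.sum_eq_zero fun n _ => ?_
    simp [gg, Nat.descFactorial_eq_zero_iff_lt.mpr h0]
  have hzero : ∑ n ∈ range (t₂+1),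
      (((0:ℕ):ℂ)*(k₁:ℂ)*(((0:ℕ):ℂ)+c₁-1)) * gg a b₁ b₂ c₁ c₂ x y k₁ k₂ t₁ t₂ 0 n = 0 := by
    refine Finset.sum_eq_zero fun n _ => ?_
    simp
  rw [hlast, hzero, add_zero, add_zero, Finset.mul_sum]
  refine Finset.sum_congr rfl fun m _ => ?_
  rw [Finset.mul_sum]
  refine Finset.sum_congr rfl fun n _ => ?_
  have hp := pointwise a b₁ b₂ c₁ c₂ x y k₂ hk₁ hc₁ hc₂ t₂ hkt m n
  push_cast at hp ⊢
  linear_combination hp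

theorem difference_equation_one (a b₁ b₂ c₁ c₂ x y : ℂ) (k₁ k₂ : ℕ)
    (hk₁ : 0 < k₁) (hk₂ : 0 < k₂)
    (hc₁ : ∀ n : ℕ, c₁ ≠ -(n : ℂ)) (hc₂ : ∀ n : ℕ, c₂ ≠ -(n : ℂ))
    (F : ℕ → ℕ → ℂ)
    (hF : ∀ τ₁ τ₂ : ℕ, F τ₁ τ₂ = F2one a b₁ b₂ c₁ c₂ τ₁ τ₂ k₁ k₂ x y)
    (t₁ t₂ : ℕ) (ht₁ : k₁ + 2 ≤ t₁) (ht₂ : 1 ≤ t₂) :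
    Th1 (fun σ₁ σ₂ => (1 / (k₁ : ℂ)) * Th1 F σ₁ σ₂ + (c₁ - 1) * F σ₁ σ₂) t₁ t₂ =
      (k₁ : ℂ) * (-1 : ℂ) ^ k₁ * poch (-(t₁ : ℂ)) k₁ * x *
        ((1 / (k₁ : ℂ)) *
            Th1 (fun σ₁ σ₂ => (1 / (k₁ : ℂ)) * Th1 F σ₁ σ₂ + b₁ * F σ₁ σ₂) (t₁ - k₁) t₂ +
          (1 / (k₂ : ℂ)) *
            Th2 (fun σ₁ σ₂ => (1 / (k₁ : ℂ)) * Th1 F σ₁ σ₂ + b₁ * F σ₁ σ₂) (t₁ - k₁) t₂ +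
          a * ((1 / (k₁ : ℂ)) * Th1 F (t₁ - k₁) t₂ + b₁ * F (t₁ - k₁) t₂)) := by
  have hk₁c : (k₁:ℂ) ≠ 0 := Nat.cast_ne_zero.mpr hk₁.ne'
  have hk₂c : (k₂:ℂ) ≠ 0 := Nat.cast_ne_zero.mpr hk₂.ne'
  set S : (ℕ → ℕ → ℂ) → ℕ → ℕ → ℂ := fun w τ₁ τ₂ =>
    ∑ m ∈ Finset.range (t₁+1), ∑ n ∈ Finset.range (t₂+1),
      w m n * gg a b₁ b₂ c₁ c₂ x y k₁ k₂ τ₁ τ₂ m n with hS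
  have hFS : ∀ τ₁ τ₂, τ₁ ≤ t₁ → τ₂ ≤ t₂ → F τ₁ τ₂ = S (fun _ _ => 1) τ₁ τ₂ := by
    intro τ₁ τ₂ h1 h2
    rw [hF, F2one_ext a b₁ b₂ c₁ c₂ x y hk₁ hk₂ h1 h2, hS]
    simp only [one_mul]
  have hT1 : ∀ (w : ℕ → ℕ → ℂ) (τ₁ τ₂ : ℕ), 1 ≤ τ₁ →
      (τ₁:ℂ) * (S w τ₁ τ₂ - S w (τ₁-1) τ₂)
        = S (fun m n => (m:ℂ)*(k₁:ℂ)*w m n) τ₁ τ₂ := by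
    intro w τ₁ τ₂ h
    rw [hS]
    exact eig1 a b₁ b₂ c₁ c₂ x y k₁ k₂ w h τ₂ _ _
  have hT2 : ∀ (w : ℕ → ℕ → ℂ) (τ₁ τ₂ : ℕ), 1 ≤ τ₂ →
      (τ₂:ℂ) * (S w τ₁ τ₂ - S w τ₁ (τ₂-1))
        = S (fun m n => (n:ℂ)*(k₂:ℂ)*w m n) τ₁ τ₂ := by
    intro w τ₁ τ₂ h
    rw [hS]
    exact eig2 a b₁ b₂ c₁ c₂ x y k₁ k₂ w τ₁ h _ _
  have hcong : ∀ (u v : ℕ → ℕ → ℂ) τ₁ τ₂, (∀ m n, u m n = v m n) →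
      S u τ₁ τ₂ = S v τ₁ τ₂ := by
    intro u v τ₁ τ₂ h
    rw [hS]
    exact Finset.sum_congr rfl fun m _ => Finset.sum_congr rfl fun n _ => by rw [h]
  have hlin3 : ∀ (α β γ : ℂ) (u v w : ℕ → ℕ → ℂ) τ₁ τ₂,
      α * S u τ₁ τ₂ + β * S v τ₁ τ₂ + γ * S w τ₁ τ₂
        = S (fun m n => α * u m n + β * v m n + γ * w m n) τ₁ τ₂ := by
    intro α β γ u v w τ₁ τ₂
    rw [hS]
    simp only [Finset.mul_sum, ← Finset.sum_add_distrib]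
    exact Finset.sum_congr rfl fun m _ => Finset.sum_congr rfl fun n _ => by ring
  have hlin2 : ∀ (α β : ℂ) (u v : ℕ → ℕ → ℂ) τ₁ τ₂,
      α * S u τ₁ τ₂ + β * S v τ₁ τ₂
        = S (fun m n => α * u m n + β * v m n) τ₁ τ₂ := by
    intro α β u v τ₁ τ₂
    rw [hS]
    simp only [Finset.mul_sum, ← Finset.sum_add_distrib]
    exact Finset.sum_congr rfl fun m _ => Finset.sum_congr rfl fun n _ => by ring
  have hTh1F : ∀ τ₁ τ₂, 1 ≤ τ₁ → τ₁ ≤ t₁ → τ₂ ≤ t₂ →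
      Th1 F τ₁ τ₂ = S (fun m n => (m:ℂ)*(k₁:ℂ)) τ₁ τ₂ := by
    intro τ₁ τ₂ h1 h2 h3
    show (τ₁:ℂ) * (F τ₁ τ₂ - F (τ₁-1) τ₂) = _
    rw [hFS τ₁ τ₂ h2 h3, hFS (τ₁-1) τ₂ (by omega) h3, hT1 (fun _ _ => 1) τ₁ τ₂ h1]
    exact hcong _ _ _ _ fun m n => by ring
  have hG : ∀ τ₁ τ₂, 1 ≤ τ₁ → τ₁ ≤ t₁ → τ₂ ≤ t₂ →
      (1 / (k₁:ℂ)) * Th1 F τ₁ τ₂ + (c₁ - 1) * F τ₁ τ₂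
        = S (fun m n => (m:ℂ) + c₁ - 1) τ₁ τ₂ := by
    intro τ₁ τ₂ h1 h2 h3
    rw [hTh1F τ₁ τ₂ h1 h2 h3, hFS τ₁ τ₂ h2 h3, hlin2]
    refine hcong _ _ _ _ fun m n => ?_
    field_simp
    ring
  have hG' : ∀ τ₁ τ₂, 1 ≤ τ₁ → τ₁ ≤ t₁ → τ₂ ≤ t₂ →
      (1 / (k₁:ℂ)) * Th1 F τ₁ τ₂ + b₁ * F τ₁ τ₂
        = S (fun m n => (m:ℂ) + b₁) τ₁ τ₂ := by
    intro τ₁ τ₂ h1 h2 h3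
    rw [hTh1F τ₁ τ₂ h1 h2 h3, hFS τ₁ τ₂ h2 h3, hlin2]
    refine hcong _ _ _ _ fun m n => ?_
    field_simp
    try ring
  -- left-hand side
  have hL : Th1 (fun σ₁ σ₂ => (1 / (k₁ : ℂ)) * Th1 F σ₁ σ₂ + (c₁ - 1) * F σ₁ σ₂) t₁ t₂
      = S (fun m n => (m:ℂ)*(k₁:ℂ)*((m:ℂ)+c₁-1)) t₁ t₂ := by
    show (t₁:ℂ) * (((1 / (k₁ : ℂ)) * Th1 F t₁ t₂ + (c₁ - 1) * F t₁ t₂)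
        - ((1 / (k₁ : ℂ)) * Th1 F (t₁-1) t₂ + (c₁ - 1) * F (t₁-1) t₂)) = _
    rw [hG t₁ t₂ (by omega) le_rfl le_rfl, hG (t₁-1) t₂ (by omega) (by omega) le_rfl,
      hT1 (fun m n => (m:ℂ) + c₁ - 1) t₁ t₂ (by omega)]
  -- right-hand side pieces at t₁ - k₁
  have hR1 : Th1 (fun σ₁ σ₂ => (1 / (k₁ : ℂ)) * Th1 F σ₁ σ₂ + b₁ * F σ₁ σ₂) (t₁ - k₁) t₂
      = S (fun m n => (m:ℂ)*(k₁:ℂ)*((m:ℂ)+b₁)) (t₁ - k₁) t₂ := by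
    show ((t₁ - k₁ : ℕ):ℂ) * (((1 / (k₁ : ℂ)) * Th1 F (t₁-k₁) t₂ + b₁ * F (t₁-k₁) t₂)
        - ((1 / (k₁ : ℂ)) * Th1 F (t₁-k₁-1) t₂ + b₁ * F (t₁-k₁-1) t₂)) = _
    rw [hG' (t₁-k₁) t₂ (by omega) (by omega) le_rfl,
      hG' (t₁-k₁-1) t₂ (by omega) (by omega) le_rfl,
      hT1 (fun m n => (m:ℂ) + b₁) (t₁-k₁) t₂ (by omega)]
  have hR2 : Th2 (fun σ₁ σ₂ => (1 / (k₁ : ℂ)) * Th1 F σ₁ σ₂ + b₁ * F σ₁ σ₂) (t₁ - k₁) t₂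
      = S (fun m n => (n:ℂ)*(k₂:ℂ)*((m:ℂ)+b₁)) (t₁ - k₁) t₂ := by
    show ((t₂ : ℕ):ℂ) * (((1 / (k₁ : ℂ)) * Th1 F (t₁-k₁) t₂ + b₁ * F (t₁-k₁) t₂)
        - ((1 / (k₁ : ℂ)) * Th1 F (t₁-k₁) (t₂-1) + b₁ * F (t₁-k₁) (t₂-1))) = _
    rw [hG' (t₁-k₁) t₂ (by omega) (by omega) le_rfl,
      hG' (t₁-k₁) (t₂-1) (by omega) (by omega) (by omega),
      hT2 (fun m n => (m:ℂ) + b₁) (t₁-k₁) t₂ (by omega)]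
  have hR3 : (1 / (k₁:ℂ)) * Th1 F (t₁ - k₁) t₂ + b₁ * F (t₁ - k₁) t₂
      = S (fun m n => (m:ℂ) + b₁) (t₁ - k₁) t₂ :=
    hG' (t₁-k₁) t₂ (by omega) (by omega) le_rfl
  rw [hL, hR1, hR2, hR3, hlin3]
  have hw : S (fun m n => 1 / (k₁:ℂ) * ((m:ℂ)*(k₁:ℂ)*((m:ℂ)+b₁))
      + 1 / (k₂:ℂ) * ((n:ℂ)*(k₂:ℂ)*((m:ℂ)+b₁)) + a * ((m:ℂ)+b₁)) (t₁-k₁) t₂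
      = S (fun m n => ((m:ℂ)+(n:ℂ)+a)*((m:ℂ)+b₁)) (t₁-k₁) t₂ := by
    refine hcong _ _ _ _ fun m n => ?_
    field_simp
  rw [hw]
  have hKc : (k₁:ℂ) * (-1:ℂ)^k₁ * poch (-(t₁:ℂ)) k₁ = (k₁:ℂ) * (t₁.descFactorial k₁ : ℂ) := by
    rw [mul_assoc, poch_neg_nat]
  rw [hKc]
  rw [hS]
  exact final_sum a b₁ b₂ c₁ c₂ x y k₂ hk₁ hc₁ hc₂ t₂ (by omega) (by omega)
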